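/- Let g be a real polynomial. Then the following are equivalent: (a) there exist an integer d ≥ deg(g) and real numbers α_0, α_1, …, α_d with α_0 = 0, α_d = 1 and α_{k−1} ≤ α_k for all 1 ≤ k ≤ d (so the coefficients are nondecreasing and lie in [0,1]), such that g(x) = Σ_{k=0}^d α_k · b_{k,d}(x); (b) g(0) = 0, g(1) = 1, and both 0 < g(x) < 1 and g'(x) > 0 hold for all x ∈ (0,1). -/

import Mathlib

namespace RTRAux

open Polynomial Finset

lemma bern_eval_pos {n k : ℕ} (hk : k ≤ n) {x : ℝ} (hx : x ∈ Set.Ioo (0:ℝ) 1) :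
    0 < (bernsteinPolynomial ℝ n k).eval x := by
  simp only [bernsteinPolynomial, eval_mul, eval_pow, eval_natCast, eval_X, eval_sub, eval_one]
  have h1 := hx.1
  have h2 := hx.2
  have h3 : (0:ℝ) < n.choose k := by exact_mod_cast Nat.choose_pos hk
  have h4 : (0:ℝ) < 1 - x := by linarith
  positivity

lemma deriv_sum_bern (n : ℕ) (α : ℕ → ℝ) :
    Polynomial.derivative (∑ k ∈ range (n + 2), C (α k) * bernsteinPolynomial ℝ (n+1) k)
    = C ((n:ℝ)+1) * ∑ k ∈ range (n + 1), C (α (k+1) - α k) * bernsteinPolynomial ℝ n k := by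
  have hcast : ((n:ℝ[X]) + 1) = C ((n:ℝ)+1) := by
    rw [map_add, map_one, Polynomial.C_eq_natCast]
  have h0 : ∑ k ∈ range (n+1), C (α (k+1)) * bernsteinPolynomial ℝ n (k+1)
      = ∑ k ∈ range (n+1), C (α k) * bernsteinPolynomial ℝ n k
        - C (α 0) * bernsteinPolynomial ℝ n 0 := by
    have h1 := Finset.sum_range_succ' (fun k => C (α k) * bernsteinPolynomial ℝ n k) (n+1)
    rw [Finset.sum_range_succ] at h1
    rw [bernsteinPolynomial.eq_zero_of_lt ℝ (Nat.lt_succ_self n)] at h1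
    rw [mul_zero, add_zero] at h1
    linear_combination -h1
  rw [derivative_sum]
  rw [Finset.sum_range_succ' (fun k => Polynomial.derivative (C (α k) * bernsteinPolynomial ℝ (n+1) k)) (n+1)]
  simp only [derivative_C_mul, bernsteinPolynomial.derivative_succ_aux ℝ n,
    bernsteinPolynomial.derivative_zero, Nat.add_sub_cancel]
  push_cast
  simp only [hcast]
  have : ∀ k, C (α (k+1)) * (C ((n:ℝ)+1) * (bernsteinPolynomial ℝ n k - bernsteinPolynomial ℝ n (k+1)))
      = C ((n:ℝ)+1) * (C (α (k+1)) * bernsteinPolynomial ℝ n k)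
        - C ((n:ℝ)+1) * (C (α (k+1)) * bernsteinPolynomial ℝ n (k+1)) := by
    intro k; ring
  rw [Finset.sum_congr rfl (fun k _ => this k), Finset.sum_sub_distrib,
    ← Finset.mul_sum, ← Finset.mul_sum, h0]
  have hsum : ∑ k ∈ range (n+1), C (α (k+1) - α k) * bernsteinPolynomial ℝ n k
      = (∑ k ∈ range (n+1), C (α (k+1)) * bernsteinPolynomial ℝ n k)
         - ∑ k ∈ range (n+1), C (α k) * bernsteinPolynomial ℝ n k := by
    rw [← Finset.sum_sub_distrib]
    exact Finset.sum_congr rfl (fun k _ => by rw [map_sub]; ring)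
  rw [hsum]
  ring

lemma desc_choose (n k j : ℕ) (hjk : j ≤ k) (hkn : k ≤ n) :
    Nat.descFactorial k j * Nat.choose n k = Nat.descFactorial n j * Nat.choose (n-j) (k-j) := by
  rw [Nat.descFactorial_eq_factorial_mul_choose, Nat.descFactorial_eq_factorial_mul_choose,
    mul_assoc, mul_assoc]
  congr 1
  rw [mul_comm (Nat.choose k j), Nat.choose_mul hjk]

lemma bern_monomial (n j : ℕ) (hj : j ≤ n) :
    ∑ k ∈ range (n+1), C ((Nat.descFactorial k j : ℝ)) * bernsteinPolynomial ℝ n k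
    = C ((Nat.descFactorial n j : ℝ)) * Polynomial.X ^ j := by
  have hsub : ∑ k ∈ range (n+1), C ((Nat.descFactorial k j : ℝ)) * bernsteinPolynomial ℝ n k
      = ∑ k ∈ Finset.Ico j (n+1), C ((Nat.descFactorial k j : ℝ)) * bernsteinPolynomial ℝ n k := by
    refine (Finset.sum_subset ?_ ?_).symm
    · intro k hk
      simp only [Finset.mem_Ico] at hk
      simp only [Finset.mem_range]
      omega
    · intro k hk hk2
      simp only [Finset.mem_range] at hk
      simp only [Finset.mem_Ico] at hk2
      have hlt : k < j := by omega
      rw [Nat.descFactorial_eq_zero_iff_lt.mpr hlt]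
      simp
  rw [hsub, Finset.sum_Ico_eq_sum_range]
  have hrange : n + 1 - j = (n - j) + 1 := by omega
  rw [hrange]
  have hterm : ∀ i ∈ range ((n-j)+1),
      C ((Nat.descFactorial (j+i) j : ℝ)) * bernsteinPolynomial ℝ n (j+i)
      = C ((Nat.descFactorial n j : ℝ)) * (X^j * bernsteinPolynomial ℝ (n-j) i) := by
    intro i hi
    simp only [Finset.mem_range] at hi
    have hin : j + i ≤ n := by omega
    have key : (Nat.descFactorial (j+i) j : ℝ) * (Nat.choose n (j+i) : ℝ)
        = (Nat.descFactorial n j : ℝ) * (Nat.choose (n-j) i : ℝ) := by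
      have h := desc_choose n (j+i) j (by omega) hin
      rw [Nat.add_sub_cancel_left] at h
      exact_mod_cast h
    simp only [bernsteinPolynomial]
    have h1 : n - (j+i) = (n-j) - i := by omega
    rw [h1, pow_add, ← Polynomial.C_eq_natCast, ← Polynomial.C_eq_natCast]
    have hCkey : (C ((Nat.descFactorial (j+i) j : ℝ))) * C ((Nat.choose n (j+i) : ℝ))
        = C ((Nat.descFactorial n j : ℝ)) * C ((Nat.choose (n-j) i : ℝ)) := by
      rw [← map_mul, ← map_mul, key]
    linear_combination hCkey * (X^j * X^i * (1 - X)^((n-j)-i))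
  rw [Finset.sum_congr rfl hterm, ← Finset.mul_sum]
  congr 1
  rw [← Finset.mul_sum, bernsteinPolynomial.sum, mul_one]

noncomputable def bernCoeff (q : Polynomial ℝ) (n k : ℕ) : ℝ :=
  ∑ j ∈ range (q.natDegree + 1),
    q.coeff j * ((Nat.descFactorial k j : ℝ) / (Nat.descFactorial n j : ℝ))

lemma bern_repr (q : Polynomial ℝ) (n : ℕ) (hq : q.natDegree ≤ n) :
    q = ∑ k ∈ range (n+1), C (bernCoeff q n k) * bernsteinPolynomial ℝ n k := by
  simp only [bernCoeff, map_sum, Finset.sum_mul]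
  rw [Finset.sum_comm]
  have hstep : ∀ j ∈ range (q.natDegree + 1),
      ∑ k ∈ range (n+1),
        C (q.coeff j * ((Nat.descFactorial k j : ℝ) / (Nat.descFactorial n j : ℝ)))
          * bernsteinPolynomial ℝ n k
      = C (q.coeff j) * X ^ j := by
    intro j hj
    simp only [Finset.mem_range] at hj
    have hjn : j ≤ n := by omega
    have hdn : (Nat.descFactorial n j : ℝ) ≠ 0 := by
      have h0 : Nat.descFactorial n j ≠ 0 := by
        intro h
        exact absurd (Nat.descFactorial_eq_zero_iff_lt.mp h) (by omega)
      exact_mod_cast h0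
    have : ∀ k, C (q.coeff j * ((Nat.descFactorial k j : ℝ) / (Nat.descFactorial n j : ℝ)))
        = C (q.coeff j / (Nat.descFactorial n j : ℝ)) * C ((Nat.descFactorial k j : ℝ)) := by
      intro k
      rw [← map_mul]
      congr 1
      ring
    simp only [this, mul_assoc, ← Finset.mul_sum]
    rw [bern_monomial n j hjn, ← mul_assoc, ← map_mul, div_mul_cancel₀ _ hdn]
  rw [Finset.sum_congr rfl hstep]
  conv_lhs => rw [q.as_sum_range' (q.natDegree + 1) (Nat.lt_succ_self _)]
  exact Finset.sum_congr rfl fun j _ => (Polynomial.C_mul_X_pow_eq_monomial).symm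

lemma prod_diff_bound (j : ℕ) (u v : ℕ → ℝ)
    (hu : ∀ i, i < j → u i ∈ Set.Icc (0:ℝ) 1) (hv : ∀ i, i < j → v i ∈ Set.Icc (0:ℝ) 1) :
    |∏ i ∈ range j, u i - ∏ i ∈ range j, v i| ≤ ∑ i ∈ range j, |u i - v i| := by
  induction j with
  | zero => simp
  | succ m ih =>
    rw [Finset.prod_range_succ, Finset.prod_range_succ, Finset.sum_range_succ]
    have ihm := ih (fun i hi => hu i (by omega)) (fun i hi => hv i (by omega))
    set P := ∏ i ∈ range m, u i with hP
    set Q := ∏ i ∈ range m, v i with hQ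
    have hQ0 : 0 ≤ Q := Finset.prod_nonneg fun i hi => (hv i (by simp at hi; omega)).1
    have hQ1 : Q ≤ 1 := Finset.prod_le_one (fun i hi => (hv i (by simp at hi; omega)).1)
      (fun i hi => (hv i (by simp at hi; omega)).2)
    have hum := hu m (by omega)
    calc |P * u m - Q * v m| = |(P - Q) * u m + Q * (u m - v m)| := by ring_nf
      _ ≤ |(P - Q) * u m| + |Q * (u m - v m)| := abs_add_le _ _
      _ = |P - Q| * |u m| + |Q| * |u m - v m| := by rw [abs_mul, abs_mul]
      _ ≤ |P - Q| * 1 + 1 * |u m - v m| := by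
          gcongr
          · rw [abs_le]; constructor <;> [linarith [hum.1]; exact hum.2]
          · rw [abs_le]; constructor <;> linarith
      _ ≤ (∑ i ∈ range m, |u i - v i|) + |u m - v m| := by rw [mul_one, one_mul]; gcongr

lemma ratio_bound (m n k j : ℕ) (hjm : j ≤ m) (hmn : m < n) (hkn : k ≤ n) :
    |(Nat.descFactorial k j : ℝ) / (Nat.descFactorial n j : ℝ) - ((k:ℝ)/(n:ℝ))^j|
      ≤ (m:ℝ)^2 / ((n:ℝ) - m) := by
  have hn0 : (0:ℝ) < n := by exact_mod_cast Nat.pos_of_ne_zero (by omega)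
  have hnm : (0:ℝ) < (n:ℝ) - m := by
    have : (m:ℝ) < n := by exact_mod_cast hmn
    linarith
  by_cases hkj : k < j
  · -- descFactorial k j = 0
    have hm1 : 1 ≤ j := by omega
    have hm : 1 ≤ m := by omega
    rw [Nat.descFactorial_eq_zero_iff_lt.mpr hkj]
    simp only [Nat.cast_zero, zero_div, zero_sub, abs_neg]
    have h01 : (0:ℝ) ≤ (k:ℝ)/n := by positivity
    have h11 : (k:ℝ)/n ≤ 1 := by
      rw [div_le_one hn0]; exact_mod_cast hkn
    have hpow : ((k:ℝ)/n)^j ≤ (k:ℝ)/n := pow_le_of_le_one h01 h11 (by omega)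
    rw [abs_of_nonneg (by positivity)]
    refine hpow.trans ?_
    rw [div_le_div_iff₀ hn0 hnm]
    have hkm : (k:ℝ) ≤ (m:ℝ) - 1 := by
      have : k + 1 ≤ m := by omega
      have := (Nat.cast_le (α := ℝ)).mpr this
      push_cast at this
      linarith
    have hm' : (1:ℝ) ≤ m := by exact_mod_cast hm
    have hk0 : (0:ℝ) ≤ k := by positivity
    have f1 : (k:ℝ)*n ≤ ((m:ℝ)-1)*n := mul_le_mul_of_nonneg_right hkm hn0.le
    have f2 : (0:ℝ) ≤ (k:ℝ)*(m:ℝ) := by positivity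
    have f3 : ((m:ℝ)-1)*n ≤ (m:ℝ)^2*n :=
      mul_le_mul_of_nonneg_right (by nlinarith [sq_nonneg ((m:ℝ)-1)]) hn0.le
    nlinarith [f1, f2, f3]
  · push_neg at hkj
    -- j ≤ k
    have hcastk : (Nat.descFactorial k j : ℝ) = ∏ i ∈ range j, ((k:ℝ) - i) := by
      rw [Nat.descFactorial_eq_prod_range]
      push_cast [Nat.cast_prod]
      refine Finset.prod_congr rfl fun i hi => ?_
      simp only [Finset.mem_range] at hi
      rw [Nat.cast_sub (by omega)]
    have hcastn : (Nat.descFactorial n j : ℝ) = ∏ i ∈ range j, ((n:ℝ) - i) := by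
      rw [Nat.descFactorial_eq_prod_range]
      push_cast [Nat.cast_prod]
      refine Finset.prod_congr rfl fun i hi => ?_
      simp only [Finset.mem_range] at hi
      rw [Nat.cast_sub (by omega)]
    have hfac : ∀ i, i < j → (0:ℝ) < (n:ℝ) - i := by
      intro i hi
      have : (i:ℝ) < n := by exact_mod_cast (by omega : i < n)
      linarith
    rw [hcastk, hcastn, ← Finset.prod_div_distrib]
    have hpowprod : ((k:ℝ)/n)^j = ∏ _i ∈ range j, ((k:ℝ)/n) := by
      rw [Finset.prod_const, Finset.card_range]
    rw [hpowprod]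
    have hu : ∀ i, i < j → ((k:ℝ) - i)/((n:ℝ) - i) ∈ Set.Icc (0:ℝ) 1 := by
      intro i hi
      have h1 := hfac i hi
      have hik : (i:ℝ) ≤ k := by exact_mod_cast (by omega : i ≤ k)
      have hkn' : (k:ℝ) ≤ n := by exact_mod_cast hkn
      exact ⟨div_nonneg (by linarith) h1.le, by rw [div_le_one h1]; linarith⟩
    have hv : ∀ i, i < j → (k:ℝ)/(n:ℝ) ∈ Set.Icc (0:ℝ) 1 := by
      intro i hi
      have hkn' : (k:ℝ) ≤ n := by exact_mod_cast hkn
      exact ⟨by positivity, by rw [div_le_one hn0]; linarith⟩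
    refine (prod_diff_bound j _ _ hu hv).trans ?_
    have hterm : ∀ i ∈ range j, |((k:ℝ) - i)/((n:ℝ) - i) - (k:ℝ)/n| ≤ (m:ℝ)/((n:ℝ) - m) := by
      intro i hi
      simp only [Finset.mem_range] at hi
      have h1 := hfac i hi
      have hik : (i:ℝ) ≤ k := by exact_mod_cast (by omega : i ≤ k)
      have hkn' : (k:ℝ) ≤ n := by exact_mod_cast hkn
      have him : (i:ℝ) ≤ (m:ℝ) - 1 := by
        have : i + 1 ≤ m := by omega
        have := (Nat.cast_le (α := ℝ)).mpr this
        push_cast at this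
        linarith
      have heq : ((k:ℝ) - i)/((n:ℝ) - i) - (k:ℝ)/n = -((i:ℝ)*((n:ℝ)-k))/(((n:ℝ)-i)*n) := by
        field_simp
        ring
      have hi0 : (0:ℝ) ≤ i := by positivity
      rw [heq, abs_div, abs_neg]
      rw [abs_of_nonneg (mul_nonneg hi0 (by linarith)), abs_of_nonneg (mul_nonneg h1.le hn0.le)]
      rw [div_le_div_iff₀ (mul_pos h1 hn0) hnm]
      have g1 : (n:ℝ)-k ≤ n := by
        have : (0:ℝ) ≤ k := by positivity
        linarith
      have g2 : (n:ℝ)-m ≤ (n:ℝ)-i := by linarith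
      have g3 : (i:ℝ) ≤ m := by linarith
      have c1 : (i:ℝ)*((n:ℝ)-k)*((n:ℝ)-m) ≤ (i:ℝ)*((n:ℝ)-k)*((n:ℝ)-i) :=
        mul_le_mul_of_nonneg_left g2 (mul_nonneg hi0 (by linarith))
      have c2 : (i:ℝ)*((n:ℝ)-k)*((n:ℝ)-i) ≤ (i:ℝ)*(n:ℝ)*((n:ℝ)-i) :=
        mul_le_mul_of_nonneg_right (mul_le_mul_of_nonneg_left g1 hi0) (le_of_lt h1)
      have c3 : (i:ℝ)*(n:ℝ)*((n:ℝ)-i) ≤ (m:ℝ)*(n:ℝ)*((n:ℝ)-i) :=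
        mul_le_mul_of_nonneg_right (mul_le_mul_of_nonneg_right g3 hn0.le) (le_of_lt h1)
      nlinarith [c1, c2, c3]
    calc ∑ i ∈ range j, |((k:ℝ) - i)/((n:ℝ) - i) - (k:ℝ)/n|
        ≤ ∑ _i ∈ range j, (m:ℝ)/((n:ℝ) - m) := Finset.sum_le_sum hterm
      _ = j * ((m:ℝ)/((n:ℝ) - m)) := by rw [Finset.sum_const, Finset.card_range, nsmul_eq_mul]
      _ ≤ m * ((m:ℝ)/((n:ℝ) - m)) := by
          have hj : (j:ℝ) ≤ m := by exact_mod_cast hjm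
          have hd : (0:ℝ) ≤ (m:ℝ)/((n:ℝ)-m) := div_nonneg (by positivity) hnm.le
          exact mul_le_mul_of_nonneg_right hj hd
      _ = (m:ℝ)^2/((n:ℝ) - m) := by ring

lemma bernCoeff_nonneg (q : Polynomial ℝ) (hq : ∀ x ∈ Set.Icc (0:ℝ) 1, 0 < q.eval x) :
    ∃ n, q.natDegree < n ∧ ∀ k, k ≤ n → 0 ≤ bernCoeff q n k := by
  set m := q.natDegree with hm
  obtain ⟨x₀, hx₀, hmin⟩ := isCompact_Icc.exists_isMinOn
    (Set.nonempty_Icc.mpr zero_le_one) (q.continuousOn (s := Set.Icc (0:ℝ) 1))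
  set δ := q.eval x₀ with hδdef
  have hδ : 0 < δ := hq x₀ hx₀
  set A := ∑ j ∈ range (m+1), |q.coeff j| with hA
  have hA0 : 0 ≤ A := Finset.sum_nonneg fun j _ => abs_nonneg _
  set n := m + 1 + Nat.ceil (A*(m:ℝ)^2/δ) with hn
  have hmn : m < n := by omega
  have hmn' : (m:ℝ) < n := by exact_mod_cast hmn
  have hnm0 : (0:ℝ) < (n:ℝ) - m := by linarith
  have hn0 : (0:ℝ) < n := by
    have : (0:ℝ) ≤ m := by positivity
    linarith
  have hceil : A*(m:ℝ)^2/δ ≤ Nat.ceil (A*(m:ℝ)^2/δ) := Nat.le_ceil _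
  have hngeq : (1:ℝ) + A*(m:ℝ)^2/δ ≤ (n:ℝ) - m := by
    have : (n:ℝ) = (m:ℝ) + 1 + (Nat.ceil (A*(m:ℝ)^2/δ) : ℝ) := by
      rw [hn]; push_cast; ring
    rw [this]; linarith
  have hkey : A * ((m:ℝ)^2/((n:ℝ)-m)) < δ := by
    rw [mul_div_assoc'] at *
    rw [div_lt_iff₀ hnm0]
    have h1 : δ * ((n:ℝ)-m) ≥ δ * (1 + A*(m:ℝ)^2/δ) :=
      mul_le_mul_of_nonneg_left hngeq hδ.le
    have h2 : δ * (1 + A*(m:ℝ)^2/δ) = δ + A*(m:ℝ)^2 := by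
      field_simp
    nlinarith
  refine ⟨n, hmn, fun k hk => ?_⟩
  have hkn' : (k:ℝ) ≤ n := by exact_mod_cast hk
  have hxk : ((k:ℝ)/n) ∈ Set.Icc (0:ℝ) 1 :=
    ⟨by positivity, by rw [div_le_one hn0]; exact hkn'⟩
  have heval : q.eval ((k:ℝ)/n) = ∑ j ∈ range (m+1), q.coeff j * ((k:ℝ)/n)^j := by
    rw [Polynomial.eval_eq_sum_range]
  have hdiff : |bernCoeff q n k - q.eval ((k:ℝ)/n)| ≤ A * ((m:ℝ)^2/((n:ℝ)-m)) := by
    rw [bernCoeff, heval, ← Finset.sum_sub_distrib, ← hm]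
    refine (Finset.abs_sum_le_sum_abs _ _).trans ?_
    have hterm : ∀ j ∈ range (m+1),
        |q.coeff j * ((Nat.descFactorial k j : ℝ) / (Nat.descFactorial n j : ℝ))
          - q.coeff j * ((k:ℝ)/n)^j| ≤ |q.coeff j| * ((m:ℝ)^2/((n:ℝ)-m)) := by
      intro j hj
      simp only [Finset.mem_range] at hj
      rw [← mul_sub, abs_mul]
      exact mul_le_mul_of_nonneg_left (ratio_bound m n k j (by omega) hmn hk) (abs_nonneg _)
    refine (Finset.sum_le_sum hterm).trans ?_
    rw [← Finset.sum_mul]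
  have hev : δ ≤ q.eval ((k:ℝ)/n) := hmin hxk
  have := (abs_le.mp hdiff).1
  linarith

lemma endpoint_pos (q : Polynomial ℝ) (h : ∀ x ∈ Set.Ioo (0:ℝ) 1, 0 < q.eval x)
    (h0 : q.eval 0 ≠ 0) (h1 : q.eval 1 ≠ 0) : ∀ x ∈ Set.Icc (0:ℝ) 1, 0 < q.eval x := by
  have key : ∀ z : ℝ, z ∈ closure (Set.Ioo (0:ℝ) 1) → q.eval z ≠ 0 → 0 < q.eval z := by
    intro z hz hne
    have hnebot := mem_closure_iff_nhdsWithin_neBot.mp hz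
    have htend : Filter.Tendsto (fun y => q.eval y) (nhdsWithin z (Set.Ioo (0:ℝ) 1))
        (nhds (q.eval z)) := (q.continuous.continuousAt).continuousWithinAt
    have hge : 0 ≤ q.eval z := by
      refine ge_of_tendsto htend ?_
      filter_upwards [self_mem_nhdsWithin] with y hy
      exact (h y hy).le
    exact lt_of_le_of_ne hge (Ne.symm hne)
  intro x hx
  rcases eq_or_lt_of_le hx.1 with he|hlt0
  · have : (0:ℝ) ∈ closure (Set.Ioo (0:ℝ) 1) := by
      rw [closure_Ioo one_ne_zero.symm]
      exact ⟨le_refl 0, zero_le_one⟩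
    rw [← he]
    exact key 0 this h0
  rcases eq_or_lt_of_le hx.2 with he|hlt1
  · rw [he]
    have : (1:ℝ) ∈ closure (Set.Ioo (0:ℝ) 1) := by
      rw [closure_Ioo one_ne_zero.symm]
      exact ⟨zero_le_one, le_refl 1⟩
    exact key 1 this h1
  exact h x ⟨hlt0, hlt1⟩

lemma factor_pos (p : Polynomial ℝ) (hp : p ≠ 0)
    (hpos : ∀ x ∈ Set.Ioo (0:ℝ) 1, 0 < p.eval x) :
    ∃ (a b : ℕ) (q : Polynomial ℝ), p = Polynomial.X^a * (1 - Polynomial.X)^b * q ∧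
      (∀ x ∈ Set.Icc (0:ℝ) 1, 0 < q.eval x) := by
  set a := p.rootMultiplicity 0 with ha
  set p1 := p /ₘ (X - C 0)^a with hp1
  have hfac1 : (X - C 0)^a * p1 = p := p.pow_mul_divByMonic_rootMultiplicity_eq 0
  have hne1 : p1.eval 0 ≠ 0 := eval_divByMonic_pow_rootMultiplicity_ne_zero 0 hp
  have hp1ne : p1 ≠ 0 := fun h => hne1 (by simp [h])
  set b := p1.rootMultiplicity 1 with hb
  set q2 := p1 /ₘ (X - C 1)^b with hq2
  have hfac2 : (X - C 1)^b * q2 = p1 := p1.pow_mul_divByMonic_rootMultiplicity_eq 1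
  have hne2 : q2.eval 1 ≠ 0 := eval_divByMonic_pow_rootMultiplicity_ne_zero 1 hp1ne
  set q : Polynomial ℝ := C ((-1:ℝ)^b) * q2 with hq
  have hCp : ((1:Polynomial ℝ) - X)^b * C ((-1:ℝ)^b) = (X - C 1)^b := by
    rw [map_pow, ← mul_pow]
    congr 1
    rw [map_neg, map_one]
    ring
  have hfac : p = X^a * (1 - X)^b * q := by
    rw [hq]
    have step : (X:Polynomial ℝ)^a * (1 - X)^b * (C ((-1:ℝ)^b) * q2)
        = (X:Polynomial ℝ)^a * (((1 - X)^b * C ((-1:ℝ)^b)) * q2) := by ring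
    rw [step, hCp, hfac2, ← hfac1]
    rw [map_zero, sub_zero]
  refine ⟨a, b, q, hfac, ?_⟩
  have hq0 : q.eval 0 ≠ 0 := by
    have heq : p1.eval 0 = ((X - C 1)^b * q2).eval 0 := by rw [hfac2]
    rw [eval_mul, eval_pow, eval_sub, eval_X, eval_C] at heq
    rw [hq, eval_mul, eval_C]
    intro hcon
    apply hne1
    rw [heq]
    have hb1 : ((0:ℝ)-1)^b = (-1:ℝ)^b := by norm_num
    rcases mul_eq_zero.mp hcon with h|h
    · exact absurd h (by positivity)
    · rw [h, hb1]; ring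
  have hq1 : q.eval 1 ≠ 0 := by
    rw [hq, eval_mul, eval_C]
    intro hcon
    rcases mul_eq_zero.mp hcon with h|h
    · exact absurd h (by positivity)
    · exact hne2 h
  have hqpos : ∀ x ∈ Set.Ioo (0:ℝ) 1, 0 < q.eval x := by
    intro x hx
    have hpx := hpos x hx
    rw [hfac] at hpx
    rw [eval_mul, eval_mul, eval_pow, eval_pow, eval_X, eval_sub, eval_one, eval_X] at hpx
    have hc : 0 < x^a * (1-x)^b := by
      have := hx.1; have h2 : (0:ℝ) < 1 - x := by have := hx.2; linarith
      positivity
    by_contra hle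
    push_neg at hle
    nlinarith
  exact endpoint_pos q hqpos hq0 hq1

lemma bern_shift (n k a b : ℕ) (hk : k ≤ n) :
    (Polynomial.X:Polynomial ℝ)^a * (1 - Polynomial.X)^b * bernsteinPolynomial ℝ n k
      = C ((Nat.choose n k : ℝ)/(Nat.choose (n+a+b) (k+a) : ℝ))
          * bernsteinPolynomial ℝ (n+a+b) (k+a) := by
  simp only [bernsteinPolynomial]
  have h1 : n + a + b - (k + a) = (n - k) + b := by omega
  rw [h1, ← Polynomial.C_eq_natCast, ← Polynomial.C_eq_natCast]
  have hC : (Nat.choose (n+a+b) (k+a) : ℝ) ≠ 0 := by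
    have := Nat.choose_pos (show k + a ≤ n + a + b by omega)
    positivity
  have hcomb : C ((Nat.choose n k : ℝ)/(Nat.choose (n+a+b) (k+a) : ℝ))
      * C ((Nat.choose (n+a+b) (k+a) : ℝ)) = C ((Nat.choose n k : ℝ)) := by
    rw [← map_mul, div_mul_cancel₀ _ hC]
  have hXp : (X:Polynomial ℝ)^(k+a) = X^k * X^a := pow_add _ _ _
  have h1Xp : ((1:Polynomial ℝ) - X)^((n-k)+b) = (1-X)^(n-k) * (1-X)^b := pow_add _ _ _
  rw [hXp, h1Xp]
  linear_combination -hcomb * (X^k * X^a * (1-X)^(n-k) * (1-X)^b)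

lemma bern_natDegree_le (n k : ℕ) : (bernsteinPolynomial ℝ n k).natDegree ≤ n := by
  by_cases h : k ≤ n
  · rw [bernsteinPolynomial]
    refine (natDegree_mul_le).trans ?_
    have h1 : ((Nat.choose n k : Polynomial ℝ) * X^k).natDegree ≤ k := by
      refine (natDegree_mul_le).trans ?_
      simp [natDegree_natCast]
    have h2 : (((1:Polynomial ℝ) - X)^(n-k)).natDegree ≤ n - k := by
      refine (natDegree_pow_le).trans ?_
      have : ((1:Polynomial ℝ) - X).natDegree ≤ 1 := by
        refine (natDegree_sub_le _ _).trans ?_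
        simp
      calc (n-k) * ((1:Polynomial ℝ) - X).natDegree ≤ (n-k) * 1 :=
            Nat.mul_le_mul_left _ this
        _ = n - k := by omega
    omega
  · rw [bernsteinPolynomial.eq_zero_of_lt ℝ (by omega)]
    simp

lemma eval_sum_bern_at_0 (d : ℕ) (α : ℕ → ℝ) :
    (∑ k ∈ range (d+1), C (α k) * bernsteinPolynomial ℝ d k).eval 0 = α 0 := by
  simp [eval_finset_sum, bernsteinPolynomial.eval_at_0, mul_ite, Finset.sum_ite_eq',
    Finset.mem_range]

lemma eval_sum_bern_at_1 (d : ℕ) (α : ℕ → ℝ) :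
    (∑ k ∈ range (d+1), C (α k) * bernsteinPolynomial ℝ d k).eval 1 = α d := by
  simp [eval_finset_sum, bernsteinPolynomial.eval_at_1, mul_ite, Finset.sum_ite_eq',
    Finset.mem_range]

end RTRAux


open Polynomial Finset in
theorem random_threshold_representation (g : Polynomial ℝ) :
    (∃ d : ℕ, g.natDegree ≤ d ∧ ∃ α : ℕ → ℝ,
      α 0 = 0 ∧ α d = 1 ∧ (∀ k, 1 ≤ k → k ≤ d → α (k - 1) ≤ α k) ∧
      g = ∑ k ∈ Finset.range (d + 1), Polynomial.C (α k) * bernsteinPolynomial ℝ d k)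
    ↔ (g.eval 0 = 0 ∧ g.eval 1 = 1 ∧
        ∀ x ∈ Set.Ioo (0 : ℝ) 1,
          (0 < g.eval x ∧ g.eval x < 1) ∧ 0 < (Polynomial.derivative g).eval x) := by
  constructor
  · rintro ⟨d, hd, α, h0, h1, hmono, hg⟩
    have hmono' : ∀ k, k < d → α k ≤ α (k+1) := by
      intro k hk
      have := hmono (k+1) (by omega) (by omega)
      simpa using this
    have he0 : g.eval 0 = 0 := by
      rw [hg, RTRAux.eval_sum_bern_at_0, h0]
    have he1 : g.eval 1 = 1 := by
      rw [hg, RTRAux.eval_sum_bern_at_1, h1]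
    refine ⟨he0, he1, ?_⟩
    obtain ⟨n, rfl⟩ : ∃ n, d = n + 1 := by
      cases d with
      | zero => rw [h0] at h1; norm_num at h1
      | succ n => exact ⟨n, rfl⟩
    have hderiv : ∀ x ∈ Set.Ioo (0:ℝ) 1, 0 < (Polynomial.derivative g).eval x := by
      intro x hx
      rw [hg, RTRAux.deriv_sum_bern]
      have hnn : ∀ k ∈ range (n+1),
          0 ≤ (C (α (k+1) - α k) * bernsteinPolynomial ℝ n k).eval x := by
        intro k hk
        rw [eval_mul, eval_C]
        have := hmono' k (by simpa using hk)
        exact mul_nonneg (by linarith) (RTRAux.bern_eval_pos (by simp at hk; omega) hx).le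
      have hex : ∃ k ∈ range (n+1),
          0 < (C (α (k+1) - α k) * bernsteinPolynomial ℝ n k).eval x := by
        by_contra hc
        push_neg at hc
        have hall : ∀ k, k < n + 1 → α (k+1) = α k := by
          intro k hk
          have h1' := hc k (Finset.mem_range.mpr hk)
          rw [eval_mul, eval_C] at h1'
          have h2 := RTRAux.bern_eval_pos (by omega : k ≤ n) hx
          have h3 := hmono' k (by omega)
          nlinarith
        have hkey : ∀ m, m ≤ n+1 → α m = α 0 := by
          intro m hm
          induction m with
          | zero => rfl
          | succ k ih => rw [hall k (by omega), ih (by omega)]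
        have := hkey (n+1) (le_refl _)
        rw [h0, h1] at this
        norm_num at this
      rw [eval_mul, eval_C, eval_finset_sum]
      have hsum := Finset.sum_pos' (fun k hk => hnn k hk) hex
      have hn1 : (0:ℝ) < (n:ℝ) + 1 := by positivity
      exact mul_pos hn1 hsum
    refine fun x hx => ⟨?_, hderiv x hx⟩
    have hsm : StrictMonoOn (fun y => g.eval y) (Set.Icc (0:ℝ) 1) := by
      apply strictMonoOn_of_deriv_pos (convex_Icc 0 1) g.continuousOn
      intro y hy
      rw [interior_Icc] at hy
      rw [Polynomial.deriv]
      exact hderiv y hy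
    have m0 : (0:ℝ) ∈ Set.Icc (0:ℝ) 1 := by norm_num
    have m1 : (1:ℝ) ∈ Set.Icc (0:ℝ) 1 := by norm_num
    have mx : x ∈ Set.Icc (0:ℝ) 1 := ⟨hx.1.le, hx.2.le⟩
    have a1 := hsm m0 mx hx.1
    have a2 := hsm mx m1 hx.2
    simp only at a1 a2
    rw [he0] at a1
    rw [he1] at a2
    exact ⟨a1, a2⟩
  · rintro ⟨he0, he1, hmid⟩
    set p := Polynomial.derivative g with hp
    have hpne : p ≠ 0 := by
      intro h
      have := Polynomial.eq_C_of_derivative_eq_zero h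
      rw [this] at he0 he1
      simp at he0 he1
      rw [he0] at he1
      norm_num at he1
    have hppos : ∀ x ∈ Set.Ioo (0:ℝ) 1, 0 < p.eval x := fun x hx => (hmid x hx).2
    obtain ⟨a, b, q, hfac, hqpos⟩ := RTRAux.factor_pos p hpne hppos
    obtain ⟨n, hqn, hcnn⟩ := RTRAux.bernCoeff_nonneg q hqpos
    have hrepr := RTRAux.bern_repr q n hqn.le
    set N := n + a + b with hN
    set e : ℕ → ℝ := fun k =>
      if a ≤ k ∧ k ≤ a + n then
        RTRAux.bernCoeff q n (k - a) * ((Nat.choose n (k-a) : ℝ)/(Nat.choose N k : ℝ)) else 0 with he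
    have he_nonneg : ∀ k, 0 ≤ e k := by
      intro k
      rw [he]
      dsimp only
      split_ifs with hk
      · refine mul_nonneg (hcnn _ (by omega)) (div_nonneg (by positivity) (by positivity))
      · exact le_refl 0
    have hpe : p = ∑ k ∈ range (N+1), C (e k) * bernsteinPolynomial ℝ N k := by
      conv_lhs => rw [hfac, hrepr]
      rw [Finset.mul_sum]
      have hsub : ∑ k ∈ range (N+1), C (e k) * bernsteinPolynomial ℝ N k
          = ∑ k ∈ Finset.Ico a (a+n+1), C (e k) * bernsteinPolynomial ℝ N k := by
        refine (Finset.sum_subset ?_ ?_).symm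
        · intro k hk
          simp only [Finset.mem_Ico] at hk
          simp only [Finset.mem_range]
          omega
        · intro k hk hk2
          simp only [Finset.mem_range] at hk
          simp only [Finset.mem_Ico] at hk2
          have : e k = 0 := by
            rw [he]
            dsimp only
            rw [if_neg (by omega)]
          rw [this, map_zero, zero_mul]
      rw [hsub, Finset.sum_Ico_eq_sum_range]
      have hlen : a + n + 1 - a = n + 1 := by omega
      rw [hlen]
      refine Finset.sum_congr rfl fun k hk => ?_
      simp only [Finset.mem_range] at hk
      have hkn : k ≤ n := by omega
      have h1 : (X:Polynomial ℝ)^a * (1 - X)^b * (C (RTRAux.bernCoeff q n k) * bernsteinPolynomial ℝ n k)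
          = C (RTRAux.bernCoeff q n k) * ((X:Polynomial ℝ)^a * (1 - X)^b * bernsteinPolynomial ℝ n k) := by
        ring
      rw [h1, RTRAux.bern_shift n k a b hkn]
      have hea : e (a + k) = RTRAux.bernCoeff q n k * ((Nat.choose n k : ℝ)/(Nat.choose N (k+a) : ℝ)) := by
        rw [he]
        dsimp only
        rw [if_pos (by omega)]
        have h2 : a + k - a = k := by omega
        have h3 : a + k = k + a := by omega
        rw [h2, h3]
      rw [hea, map_mul]
      have hNk : n + a + b = N := rfl
      rw [hNk]
      have : a + k = k + a := by omega
      rw [this]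
      ring
    set α : ℕ → ℝ := fun k => (∑ i ∈ range k, e i) / ((N:ℝ)+1) with hα
    have hα0 : α 0 = 0 := by rw [hα]; simp
    have hαstep : ∀ k, α (k+1) - α k = e k / ((N:ℝ)+1) := by
      intro k
      rw [hα]
      dsimp only
      rw [Finset.sum_range_succ]
      ring
    have hderivh : Polynomial.derivative
        (∑ k ∈ range (N+2), C (α k) * bernsteinPolynomial ℝ (N+1) k) = p := by
      rw [RTRAux.deriv_sum_bern N α, hpe, Finset.mul_sum]
      refine Finset.sum_congr rfl fun k hk => ?_
      rw [hαstep k, ← mul_assoc, ← map_mul]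
      have hNne : ((N:ℝ)+1) ≠ 0 := by positivity
      rw [mul_div_cancel₀ _ hNne]
    set h : Polynomial ℝ := ∑ k ∈ range (N+2), C (α k) * bernsteinPolynomial ℝ (N+1) k with hh
    have hgh : g = h := by
      have hdiff : Polynomial.derivative (g - h) = 0 := by
        rw [derivative_sub, hderivh, hp, sub_self]
      have := Polynomial.eq_C_of_derivative_eq_zero hdiff
      have hev : (g - h).eval 0 = 0 := by
        rw [eval_sub, he0]
        have : h.eval 0 = α 0 := by
          rw [hh]
          exact RTRAux.eval_sum_bern_at_0 (N+1) α
        rw [this, hα0, sub_zero]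
      have hc : (g - h).coeff 0 = 0 := by
        rw [this] at hev
        simpa using hev
      rw [hc, map_zero] at this
      have := sub_eq_zero.mp this
      exact this
    refine ⟨N+1, ?_, α, hα0, ?_, ?_, ?_⟩
    · rw [hgh, hh]
      refine Polynomial.natDegree_sum_le_of_forall_le _ _ fun k hk => ?_
      refine (natDegree_mul_le).trans ?_
      rw [natDegree_C]
      have := RTRAux.bern_natDegree_le (N+1) k
      omega
    · have : h.eval 1 = α (N+1) := by
        rw [hh]
        exact RTRAux.eval_sum_bern_at_1 (N+1) α
      rw [← hgh, he1] at this
      exact this.symm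
    · intro k hk1 hkd
      obtain ⟨k', rfl⟩ : ∃ k', k = k' + 1 := ⟨k - 1, by omega⟩
      have := hαstep k'
      have hN0 : (0:ℝ) < (N:ℝ)+1 := by positivity
      have he' := he_nonneg k'
      have : 0 ≤ α (k'+1) - α k' := by
        rw [hαstep k']
        positivity
      simp only [Nat.add_sub_cancel]
      linarith
    · rw [hgh, hh]
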